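/- Let (R,m,k) be a commutative Noetherian local ring which is not a field. Then the following conditions are equivalent: (i) k is a direct summand of Ω²(M) for every non-free finitely generated R-module M; (ii) k is a direct summand of Ω³(M) for every non-free finitely generated R-module M; (iii) k is a direct summand of the R-module m = Ω¹(k); (iv) soc(R) is not contained in m². -/

import Mathlib

set_option linter.unusedSectionVars false
set_option linter.unnecessarySimpa false
set_option maxHeartbeats 1000000

open IsLocalRing

universe u

/-- `k = R/m` is a direct summand of the `R`-module `M`, i.e. `M ≅ k ⊕ N` for some `N`. -/
def ResidueFieldIsSummand (R : Type u) [CommRing R] [IsLocalRing R]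
    (M : Type u) [AddCommGroup M] [Module R M] : Prop :=
  ∃ p q : Submodule R M, IsCompl p q ∧ Nonempty (p ≃ₗ[R] ResidueField R)

/-- `π : F → M` is a minimal free cover: `F` is finitely generated free, `π` is
surjective, and `ker π ⊆ m·F`. -/
def IsMinimalFreeCover (R : Type u) [CommRing R] [IsLocalRing R]
    {F M : Type u} [AddCommGroup F] [Module R F] [AddCommGroup M] [Module R M]
    (π : F →ₗ[R] M) : Prop :=
  Module.Free R F ∧ Module.Finite R F ∧ Function.Surjective π ∧
    LinearMap.ker π ≤ (maximalIdeal R) • (⊤ : Submodule R F)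

/-- `IsSyzygy R n M N` means that `N` is (isomorphic to) an `n`-th syzygy `Ωⁿ(M)` of `M`,
computed from minimal free covers. -/
def IsSyzygy (R : Type u) [CommRing R] [IsLocalRing R] :
    ℕ → ModuleCat.{u} R → ModuleCat.{u} R → Prop
  | 0, M, N => Nonempty (N ≃ₗ[R] M)
  | n + 1, M, N => ∃ (F : ModuleCat.{u} R) (π : F →ₗ[R] M),
      IsMinimalFreeCover R π ∧ IsSyzygy R n (ModuleCat.of R (LinearMap.ker π)) N

namespace SyzygyAux

variable {R : Type u} [CommRing R] [IsLocalRing R]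

theorem isSyzygy_zero_iff (M N : ModuleCat.{u} R) :
    IsSyzygy R 0 M N ↔ Nonempty (N ≃ₗ[R] M) := Iff.rfl

theorem isSyzygy_succ_iff (n : ℕ) (M N : ModuleCat.{u} R) :
    IsSyzygy R (n + 1) M N ↔ ∃ (F : ModuleCat.{u} R) (π : F →ₗ[R] M),
      IsMinimalFreeCover R π ∧ IsSyzygy R n (ModuleCat.of R (LinearMap.ker π)) N := Iff.rfl

theorem ideal_smul_top (I : Ideal R) : I • (⊤ : Submodule R R) = I := by
  apply le_antisymm
  · exact Submodule.smul_le.mpr fun a ha n _ => by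
      simpa [smul_eq_mul] using I.mul_mem_right n ha
  · intro i hi
    simpa using Submodule.smul_mem_smul hi (Submodule.mem_top (x := (1 : R)))

theorem smul_smul_le (I J : Ideal R) {X : Type u} [AddCommGroup X] [Module R X]
    (N : Submodule R X) : I • (J • N) ≤ (I * J) • N := by
  refine Submodule.smul_le.mpr fun a ha y hy => ?_
  refine Submodule.smul_induction_on hy (fun b hb n hn => ?_) (fun u v hu hv => ?_)
  · rw [smul_smul]
    exact Submodule.smul_mem_smul (Ideal.mul_mem_mul ha hb) hn
  · rw [smul_add]
    exact add_mem hu hv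

/-- Pushing membership in `I • ⊤` through the inclusion of a submodule. -/
theorem coe_mem_smul_of_mem_smul_top {X : Type u} [AddCommGroup X] [Module R X]
    {P : Submodule R X} {I : Ideal R} {w : ↥P}
    (h : w ∈ (I • ⊤ : Submodule R ↥P)) : (w : X) ∈ I • P := by
  have h2 := Submodule.mem_map_of_mem (f := P.subtype) h
  rwa [Submodule.map_smul'', Submodule.map_subtype_top] at h2

theorem mem_smul_top_of_coe_mem_smul {X : Type u} [AddCommGroup X] [Module R X]
    {P : Submodule R X} {I : Ideal R} {w : ↥P}
    (h : (w : X) ∈ I • P) : w ∈ (I • ⊤ : Submodule R ↥P) := by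
  have h2 : (w : X) ∈ Submodule.map P.subtype (I • ⊤) := by
    rw [Submodule.map_smul'', Submodule.map_subtype_top]; exact h
  obtain ⟨y, hy, hyx⟩ := h2
  rwa [show y = w from Subtype.ext hyx] at hy

theorem pi_mem_smul_top {d : ℕ} (I : Ideal R) (w : Fin d → R) (hw : ∀ i, w i ∈ I) :
    w ∈ (I • ⊤ : Submodule R (Fin d → R)) := by
  rw [pi_eq_sum_univ w]
  refine Submodule.sum_mem _ fun i _ => ?_
  exact Submodule.smul_mem_smul (hw i) Submodule.mem_top




/-- destructor: a residue field summand gives a socle element outside `m • X`. -/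
theorem exists_socle_elt {X : Type u} [AddCommGroup X] [Module R X]
    (h : ResidueFieldIsSummand R X) :
    ∃ z : X, (∀ a ∈ maximalIdeal R, a • z = 0) ∧
      z ∉ (maximalIdeal R • ⊤ : Submodule R X) := by
  obtain ⟨p, q, hpq, ⟨e⟩⟩ := h
  have hk : ∀ a ∈ maximalIdeal R, ∀ c : ResidueField R, a • c = 0 := by
    intro a ha c
    rw [Algebra.smul_def, ResidueField.algebraMap_eq,
      (residue_eq_zero_iff a).mpr ha, zero_mul]
  have hp0 : ∀ a ∈ maximalIdeal R, ∀ y : p, a • y = 0 := by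
    intro a ha y
    have : e (a • y) = 0 := by rw [map_smul, hk a ha]
    simpa using e.injective (by simpa using this)
  refine ⟨(e.symm 1 : p), fun a ha => ?_, fun hmem => ?_⟩
  · have := hp0 a ha (e.symm 1)
    calc a • ((e.symm 1 : p) : X) = ((a • e.symm 1 : p) : X) := rfl
    _ = 0 := by rw [this]; rfl
  · have hne : ((e.symm 1 : p) : X) ≠ 0 := by
      intro h0
      have : (e.symm 1 : p) = 0 := Subtype.ext h0
      have h1 : (1 : ResidueField R) = 0 := by
        have := congrArg e this
        simpa using this
      exact one_ne_zero h1
    have hsub : (maximalIdeal R • ⊤ : Submodule R X) ≤ q := by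
      rw [← hpq.codisjoint.eq_top, Submodule.smul_sup]
      apply sup_le
      · refine le_trans (Submodule.smul_le.mpr fun a ha y hy => ?_) bot_le
        have := hp0 a ha ⟨y, hy⟩
        have hz : a • y = 0 := by
          have := congrArg (Subtype.val) this
          simpa using this
        simp [hz]
      · exact Submodule.smul_le_right
    have hzq : ((e.symm 1 : p) : X) ∈ q := hsub hmem
    have hzp : ((e.symm 1 : p) : X) ∈ p := (e.symm 1).2
    have := hpq.disjoint.le_bot ⟨hzp, hzq⟩
    exact hne this

/-- constructor: a socle element outside `m • X` spans a residue field summand. -/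
theorem summand_of_socle_elt {X : Type u} [AddCommGroup X] [Module R X]
    (z : X) (hz1 : ∀ a ∈ maximalIdeal R, a • z = 0)
    (hz2 : z ∉ (maximalIdeal R • ⊤ : Submodule R X)) :
    ResidueFieldIsSummand R X := by
  classical
  set mm : Submodule R X := maximalIdeal R • ⊤ with hmm
  set Q := X ⧸ mm with hQ
  have htor : Module.IsTorsionBySet R Q ((maximalIdeal R : Ideal R) : Set R) := by
    intro x a
    obtain ⟨y, rfl⟩ := Submodule.Quotient.mk_surjective _ x
    rw [← Submodule.Quotient.mk_smul, Submodule.Quotient.mk_eq_zero]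
    exact Submodule.smul_mem_smul a.2 Submodule.mem_top
  letI : Field (R ⧸ maximalIdeal R) := Ideal.Quotient.field (maximalIdeal R)
  letI : Module (R ⧸ maximalIdeal R) Q := htor.module
  letI : IsScalarTower R (R ⧸ maximalIdeal R) Q := htor.isScalarTower
  set zbar : Q := Submodule.Quotient.mk z with hzbar
  have hzbar_ne : zbar ≠ 0 := by
    rw [hzbar, Ne, Submodule.Quotient.mk_eq_zero]
    exact hz2
  obtain ⟨C, hC⟩ := Submodule.exists_isCompl
    ((R ⧸ maximalIdeal R) ∙ zbar)
  set S : Submodule (R ⧸ maximalIdeal R) Q := (R ⧸ maximalIdeal R) ∙ zbar with hS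
  let proj : Q →ₗ[R ⧸ maximalIdeal R] S := S.linearProjOfIsCompl C hC
  let e0 : (R ⧸ maximalIdeal R) ≃ₗ[R ⧸ maximalIdeal R] S :=
    LinearEquiv.toSpanNonzeroSingleton (R ⧸ maximalIdeal R) Q zbar hzbar_ne
  let f : Q →ₗ[R ⧸ maximalIdeal R] (R ⧸ maximalIdeal R) := e0.symm.toLinearMap ∘ₗ proj
  have hfz : f zbar = 1 := by
    have h1 : proj zbar = ⟨zbar, Submodule.mem_span_singleton_self zbar⟩ :=
      Submodule.linearProjOfIsCompl_apply_left hC ⟨zbar, Submodule.mem_span_singleton_self zbar⟩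
    have h2 : e0 1 = ⟨zbar, Submodule.mem_span_singleton_self zbar⟩ :=
      LinearEquiv.toSpanNonzeroSingleton_one _ _ zbar hzbar_ne
    show e0.symm (proj zbar) = 1
    rw [h1, ← h2, LinearEquiv.symm_apply_apply]
  let fR : Q →ₗ[R] (R ⧸ maximalIdeal R) := f.restrictScalars R
  let j : (R ⧸ (maximalIdeal R : Submodule R R)) →ₗ[R] X :=
    Submodule.liftQ (maximalIdeal R : Submodule R R) (LinearMap.toSpanSingleton R X z)
      (fun a ha => by
        rw [LinearMap.mem_ker, LinearMap.toSpanSingleton_apply]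
        exact hz1 a ha)
  let ψ : X →ₗ[R] X := j ∘ₗ fR ∘ₗ mm.mkQ
  have hkey : ∀ c : R ⧸ (maximalIdeal R : Submodule R R), fR (mm.mkQ (j c)) = c := by
    intro c
    obtain ⟨r, rfl⟩ := Submodule.Quotient.mk_surjective _ c
    have h1 : j (Submodule.Quotient.mk r) = r • z := Submodule.liftQ_apply _ _ r
    rw [h1]
    have h2 : mm.mkQ (r • z) = r • zbar := by
      rw [map_smul]; rfl
    rw [h2, map_smul]
    have h3 : fR zbar = 1 := hfz
    rw [h3]
    have h4 : (1 : R ⧸ (maximalIdeal R : Submodule R R)) = Submodule.Quotient.mk 1 := rfl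
    rw [h4, ← Submodule.Quotient.mk_smul, smul_eq_mul, mul_one]
  have hfix : ∀ c, ψ (j c) = j c := by
    intro c
    show j (fR (mm.mkQ (j c))) = j c
    rw [hkey]
  have hidem : ∀ v, ψ (ψ v) = ψ v := fun v => hfix _
  have hrange : LinearMap.range ψ = LinearMap.range j := by
    apply le_antisymm
    · rintro _ ⟨v, rfl⟩
      exact ⟨fR (mm.mkQ v), rfl⟩
    · rintro _ ⟨c, rfl⟩
      exact ⟨j c, hfix c⟩
  have hinj : Function.Injective j := by
    rw [← LinearMap.ker_eq_bot]
    apply Submodule.ker_liftQ_eq_bot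
    intro r hr
    rw [LinearMap.mem_ker, LinearMap.toSpanSingleton_apply] at hr
    by_contra hrm
    have hu : IsUnit r := by
      rwa [mem_maximalIdeal, mem_nonunits_iff, not_not] at hrm
    obtain ⟨u, rfl⟩ := hu
    have : z = 0 := by
      have hz : z = (u⁻¹ : Rˣ) • ((u : R) • z) := by
        rw [Units.smul_def, smul_smul, Units.inv_mul, one_smul]
      rw [hz, hr, smul_zero]
    exact hz2 (this ▸ Submodule.zero_mem _)
  refine ⟨LinearMap.range ψ, LinearMap.ker ψ, ⟨?_, ?_⟩, ?_⟩
  · rw [disjoint_iff]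
    ext v
    simp only [Submodule.mem_inf, Submodule.mem_bot, LinearMap.mem_range, LinearMap.mem_ker]
    constructor
    · rintro ⟨⟨w, rfl⟩, hv0⟩
      rw [← hidem w, hv0]
    · rintro rfl
      exact ⟨⟨0, map_zero ψ⟩, map_zero ψ⟩
  · rw [codisjoint_iff, eq_top_iff]
    intro v _
    rw [show v = ψ v + (v - ψ v) by abel]
    refine Submodule.add_mem_sup ⟨v, rfl⟩ ?_
    rw [LinearMap.mem_ker, map_sub, hidem, sub_self]
  · rw [hrange]
    exact ⟨(LinearEquiv.ofInjective j hinj).symm⟩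

theorem summand_congr {X Y : Type u} [AddCommGroup X] [Module R X]
    [AddCommGroup Y] [Module R Y] (e : X ≃ₗ[R] Y)
    (h : ResidueFieldIsSummand R X) : ResidueFieldIsSummand R Y := by
  obtain ⟨z, hz1, hz2⟩ := exists_socle_elt h
  refine summand_of_socle_elt (e z) (fun a ha => by rw [← map_smul, hz1 a ha, map_zero]) ?_
  intro hmem
  apply hz2
  have h2 : e.symm (e z) ∈ Submodule.map (e.symm : Y →ₗ[R] X) (maximalIdeal R • ⊤) :=
    Submodule.mem_map_of_mem hmem
  rw [Submodule.map_smul''] at h2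
  have h3 : Submodule.map (e.symm : Y →ₗ[R] X) ⊤ = ⊤ := by
    rw [Submodule.map_top, LinearEquiv.range]
  rw [h3] at h2
  simpa using h2



theorem subsingleton_of_free_of_smul_zero {X : Type u} [AddCommGroup X] [Module R X]
    [Module.Free R X] {x : R} (hx : x ≠ 0) (h : ∀ y : X, x • y = 0) : Subsingleton X := by
  by_contra hns
  have : Nontrivial X := not_subsingleton_iff_nontrivial.mp hns
  let b := Module.Free.chooseBasis R X
  obtain ⟨i⟩ := b.index_nonempty
  have h1 := congrArg (fun v => b.repr v i) (h (b i))
  simp only [map_smul, Module.Basis.repr_self, Finsupp.smul_single, Finsupp.single_eq_same,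
    smul_eq_mul, mul_one, map_zero, Finsupp.coe_zero, Pi.zero_apply] at h1
  exact hx h1

theorem eq_bot_of_isCompl_of_le_smul [IsNoetherianRing R] {X : Type u} [AddCommGroup X]
    [Module R X] [Module.Finite R X] {p q : Submodule R X} (h : IsCompl p q)
    (hp : p ≤ (maximalIdeal R • ⊤ : Submodule R X)) : p = ⊥ := by
  have h2 : (maximalIdeal R • ⊤ : Submodule R X)
      = maximalIdeal R • p ⊔ maximalIdeal R • q := by
    rw [← Submodule.smul_sup, h.codisjoint.eq_top]
  have h4 : (maximalIdeal R • p ⊔ maximalIdeal R • q) ⊓ p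
      = maximalIdeal R • p ⊔ (maximalIdeal R • q ⊓ p) :=
    sup_inf_assoc_of_le _ Submodule.smul_le_right
  have h5 : maximalIdeal R • q ⊓ p ≤ ⊥ :=
    le_trans (inf_le_inf_right p Submodule.smul_le_right) h.disjoint.symm.le_bot
  have h1 : p ≤ maximalIdeal R • p := by
    have h3 : p ≤ (maximalIdeal R • p ⊔ maximalIdeal R • q) ⊓ p :=
      le_inf (le_trans hp h2.le) le_rfl
    calc p ≤ maximalIdeal R • p ⊔ (maximalIdeal R • q ⊓ p) := h3.trans h4.le
    _ ≤ maximalIdeal R • p ⊔ ⊥ := sup_le_sup_left h5 _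
    _ = maximalIdeal R • p := sup_bot_eq _
  exact Submodule.eq_bot_of_le_smul_of_le_jacobson_bot (maximalIdeal R) p
    (IsNoetherian.noetherian p) h1 (IsLocalRing.maximalIdeal_le_jacobson ⊥)

theorem not_free_of_cover [IsNoetherianRing R] {X M0 : Type u} [AddCommGroup X] [Module R X]
    [Module.Finite R X] [AddCommGroup M0] [Module R M0] (π : X →ₗ[R] M0)
    (hsurj : Function.Surjective π)
    (hker : LinearMap.ker π ≤ (maximalIdeal R • ⊤ : Submodule R X))
    (hne : LinearMap.ker π ≠ ⊥) : ¬ Module.Free R M0 := by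
  intro hfree
  obtain ⟨σ, hσ⟩ := Module.projective_lifting_property π LinearMap.id hsurj
  have hσ' : ∀ y, π (σ y) = y := fun y => congrFun (congrArg (fun f => f.toFun) hσ) y
  have hcompl : IsCompl (LinearMap.ker π) (LinearMap.range σ) := by
    constructor
    · rw [disjoint_iff]
      ext v
      simp only [Submodule.mem_inf, LinearMap.mem_ker, LinearMap.mem_range, Submodule.mem_bot]
      constructor
      · rintro ⟨hv0, y, rfl⟩
        rw [hσ' y] at hv0
        rw [hv0, map_zero]
      · rintro rfl
        exact ⟨map_zero _, 0, map_zero _⟩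
    · rw [codisjoint_iff, eq_top_iff]
      intro v _
      rw [show v = (v - σ (π v)) + σ (π v) by abel]
      refine Submodule.add_mem_sup ?_ ⟨π v, rfl⟩
      rw [LinearMap.mem_ker, map_sub, hσ' (π v), sub_self]
  exact hne (eq_bot_of_isCompl_of_le_smul hcompl hker)




theorem summand_of_syzygyOne [IsNoetherianRing R] {x : R}
    (hx2 : x ∉ maximalIdeal R ^ 2) (hxm : ∀ a ∈ maximalIdeal R, a * x = 0)
    (K : ModuleCat.{u} R) (hK : Nontrivial K) (hxK : ∀ y : K, x • y = 0)
    (N : ModuleCat.{u} R) (h : IsSyzygy R 1 K N) : ResidueFieldIsSummand R N := by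
  obtain ⟨F, ρ, ⟨hfree, hfin, hsurj, hker⟩, ⟨e⟩⟩ := h
  haveI := hfree
  haveI := hfin
  haveI : Nontrivial F := by
    obtain ⟨y, hy⟩ := exists_ne (0 : K)
    obtain ⟨g, hg⟩ := hsurj y
    exact nontrivial_of_ne g 0 fun h0 => hy (by rw [← hg, h0, map_zero])
  let b := Module.Free.chooseBasis R F
  obtain ⟨i⟩ := b.index_nonempty
  have hzker : x • b i ∈ LinearMap.ker ρ := by
    rw [LinearMap.mem_ker, map_smul]
    exact hxK (ρ (b i))
  refine summand_congr (R := R) (X := ↥(LinearMap.ker ρ)) e.symm ?_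
  refine summand_of_socle_elt (⟨x • b i, hzker⟩ : ↥(LinearMap.ker ρ)) ?_ ?_
  · intro a ha
    apply Subtype.ext
    show a • (x • b i) = (0 : F)
    rw [smul_smul, hxm a ha, zero_smul]
  · intro hmem
    have h2 : (x • b i : F) ∈ maximalIdeal R • (LinearMap.ker ρ) :=
      coe_mem_smul_of_mem_smul_top hmem
    have h3 : (x • b i : F) ∈ (maximalIdeal R * maximalIdeal R) • (⊤ : Submodule R F) :=
      smul_smul_le _ _ _ (smul_mono_right _ hker h2)
    have h4 := Submodule.mem_map_of_mem (f := (b.coord i : F →ₗ[R] R)) h3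
    rw [Submodule.map_smul''] at h4
    have h5 : b.coord i (x • b i) ∈ (maximalIdeal R * maximalIdeal R) • (⊤ : Submodule R R) :=
      (smul_mono_right (maximalIdeal R * maximalIdeal R) le_top :
        _ ≤ (maximalIdeal R * maximalIdeal R) • (⊤ : Submodule R R)) h4
    rw [ideal_smul_top] at h5
    have h6 : b.coord i (x • b i) = x := by
      simp [Module.Basis.coord_apply]
    rw [h6] at h5
    rw [pow_two] at hx2
    exact hx2 h5

theorem mem_socle_iff {z : R} :
    z ∈ Submodule.torsionBySet R R (maximalIdeal R : Set R) ↔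
      ∀ a ∈ maximalIdeal R, a * z = 0 := by
  rw [Submodule.mem_torsionBySet_iff]
  constructor
  · intro h a ha
    simpa [smul_eq_mul] using h ⟨a, ha⟩
  · intro h a
    simpa [smul_eq_mul] using h a a.2

theorem socle_le_maximalIdeal (hR : ¬ IsField R) :
    Submodule.torsionBySet R R (maximalIdeal R : Set R) ≤ maximalIdeal R := by
  intro z hz
  rw [mem_socle_iff] at hz
  by_contra hzm
  have hu : IsUnit z := by rwa [mem_maximalIdeal, mem_nonunits_iff, not_not] at hzm
  apply hR
  rw [IsLocalRing.isField_iff_maximalIdeal_eq, eq_bot_iff]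
  intro a ha
  have h1 := hz a ha
  have ha0 : a = 0 := by
    obtain ⟨u, rfl⟩ := hu
    have h2 : a * (u : R) * ((u⁻¹ : Rˣ) : R) = 0 := by rw [h1, zero_mul]
    rwa [mul_assoc, Units.mul_inv, mul_one] at h2
  simp [ha0]

theorem exists_socle_cover [IsNoetherianRing R] :
    ∃ (d : ℕ) (ρ2 : (Fin d → R) →ₗ[R] ↥(Submodule.torsionBySet R R (maximalIdeal R : Set R))),
      Function.Surjective ρ2 ∧ LinearMap.ker ρ2
        = Submodule.pi Set.univ (fun _ : Fin d => (maximalIdeal R : Submodule R R)) := by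
  classical
  set Soc := Submodule.torsionBySet R R (maximalIdeal R : Set R) with hSoc
  have htor : Module.IsTorsionBySet R ↥Soc ((maximalIdeal R : Ideal R) : Set R) := by
    intro y a
    apply Subtype.ext
    show (a : R) • (y : R) = 0
    exact (Submodule.mem_torsionBySet_iff _ _).mp y.2 a
  letI : Field (R ⧸ maximalIdeal R) := Ideal.Quotient.field _
  letI : Module (R ⧸ maximalIdeal R) ↥Soc := htor.module
  letI : IsScalarTower R (R ⧸ maximalIdeal R) ↥Soc := htor.isScalarTower
  haveI hfinR : Module.Finite R ↥Soc := Module.Finite.iff_fg.mpr (IsNoetherian.noetherian Soc)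
  haveI : Module.Finite (R ⧸ maximalIdeal R) ↥Soc := by
    rw [Module.finite_def]
    obtain ⟨S, hS⟩ := Module.finite_def.mp hfinR
    refine ⟨S, ?_⟩
    rw [eq_top_iff]
    intro y _
    have hy : y ∈ Submodule.span R (S : Set ↥Soc) := hS ▸ Submodule.mem_top
    exact Submodule.span_le_restrictScalars R (R ⧸ maximalIdeal R) (S : Set ↥Soc) hy
  set d := Module.finrank (R ⧸ maximalIdeal R) ↥Soc with hd
  let bas : Module.Basis (Fin d) (R ⧸ maximalIdeal R) ↥Soc := Module.finBasis _ _
  have hmk : ∀ (r : R) (y : ↥Soc), r • y = (Ideal.Quotient.mk (maximalIdeal R) r) • y :=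
    fun r y => (Module.IsTorsionBySet.mk_smul htor r y).symm
  let ρ2 : (Fin d → R) →ₗ[R] ↥Soc :=
    { toFun := fun r => ∑ i, r i • bas i
      map_add' := by
        intro r s
        simp [add_smul, Finset.sum_add_distrib]
      map_smul' := by
        intro c r
        simp [Finset.smul_sum, mul_smul] }
  refine ⟨d, ρ2, ?_, ?_⟩
  · intro y
    refine ⟨fun i => (Ideal.Quotient.mk_surjective (bas.repr y i)).choose, ?_⟩
    show ∑ i, _ • bas i = y
    calc ∑ i, ((Ideal.Quotient.mk_surjective (I := maximalIdeal R) (bas.repr y i)).choose) • bas i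
        = ∑ i, (bas.repr y i) • bas i := by
          refine Finset.sum_congr rfl fun i _ => ?_
          rw [hmk, (Ideal.Quotient.mk_surjective (bas.repr y i)).choose_spec]
    _ = y := bas.sum_repr y
  · ext r
    simp only [LinearMap.mem_ker, Submodule.mem_pi, Set.mem_univ, forall_true_left]
    constructor
    · intro h0 i
      have h1 : ∑ j, (Ideal.Quotient.mk (maximalIdeal R) (r j)) • bas j = 0 := by
        rw [← h0]
        exact (Finset.sum_congr rfl fun j _ => (hmk (r j) (bas j)).symm)
      have h2 := Fintype.linearIndependent_iff.mp bas.linearIndependent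
        (fun j => Ideal.Quotient.mk (maximalIdeal R) (r j)) h1 i
      exact Ideal.Quotient.eq_zero_iff_mem.mp h2
    · intro h
      show ∑ j, r j • bas j = 0
      refine Finset.sum_eq_zero fun j _ => ?_
      rw [hmk, Ideal.Quotient.eq_zero_iff_mem.mpr (h j), zero_smul]

theorem not_summand_pi [IsNoetherianRing R]
    (h4 : Submodule.torsionBySet R R (maximalIdeal R : Set R) ≤ maximalIdeal R ^ 2) (d : ℕ) :
    ¬ ResidueFieldIsSummand R
      ↥(Submodule.pi Set.univ (fun _ : Fin d => (maximalIdeal R : Submodule R R))) := by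
  classical
  intro h
  obtain ⟨w, hw1, hw2⟩ := exists_socle_elt h
  apply hw2
  apply mem_smul_top_of_coe_mem_smul
  have hcoord : ∀ i, (w : Fin d → R) i ∈ maximalIdeal R * maximalIdeal R := by
    intro i
    rw [← pow_two]
    apply h4
    rw [mem_socle_iff]
    intro a ha
    have h2 := congrFun (congrArg (Subtype.val) (hw1 a ha)) i
    simpa [smul_eq_mul] using h2
  have key : ∀ i, ∀ c ∈ maximalIdeal R * maximalIdeal R,
      c • (fun j => if i = j then (1 : R) else 0) ∈
        (maximalIdeal R • Submodule.pi Set.univ (fun _ : Fin d => (maximalIdeal R : Submodule R R)) :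
          Submodule R (Fin d → R)) := by
    intro i c hc
    refine Submodule.mul_induction_on hc (fun a ha b hb => ?_) (fun v v' hv hv' => ?_)
    · rw [mul_smul]
      refine Submodule.smul_mem_smul ha ?_
      rw [Submodule.mem_pi]
      intro j _
      simp only [Pi.smul_apply, smul_eq_mul, mul_ite, mul_one, mul_zero]
      split
      · exact hb
      · exact Submodule.zero_mem _
    · rw [add_smul]
      exact Submodule.add_mem _ hv hv'
  rw [pi_eq_sum_univ (w : Fin d → R)]
  exact Submodule.sum_mem _ fun i _ => key i _ (hcoord i)


theorem pi_le_smul_top (d : ℕ) :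
    Submodule.pi Set.univ (fun _ : Fin d => (maximalIdeal R : Submodule R R)) ≤
      (maximalIdeal R • ⊤ : Submodule R (Fin d → R)) := fun r hr =>
  pi_mem_smul_top _ r fun i => Submodule.mem_pi.mp hr i trivial

theorem no_summand_of_socle_bot
    (hsoc : Submodule.torsionBySet R R (maximalIdeal R : Set R) = ⊥)
    {n : ℕ} {L : Submodule R (Fin n → R)}
    (h : ResidueFieldIsSummand R ↥L) : False := by
  obtain ⟨z, hz1, hz2⟩ := exists_socle_elt h
  apply hz2
  have hz0 : (z : Fin n → R) = 0 := by
    funext i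
    have hzi : (z : Fin n → R) i ∈ Submodule.torsionBySet R R (maximalIdeal R : Set R) := by
      rw [mem_socle_iff]
      intro a ha
      have h1 := congrFun (congrArg (Subtype.val) (hz1 a ha)) i
      simpa [smul_eq_mul] using h1
    rw [hsoc] at hzi
    simpa using hzi
  have : z = 0 := Subtype.ext hz0
  rw [this]
  exact Submodule.zero_mem _

/-- Existence of minimal free covers of finitely generated modules over Noetherian
local rings. -/
theorem exists_minimal_cover [IsNoetherianRing R] (X : Type u) [AddCommGroup X] [Module R X]
    [Module.Finite R X] :
    ∃ (n : ℕ) (φ : (Fin n → R) →ₗ[R] X), Function.Surjective φ ∧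
      LinearMap.ker φ ≤ (maximalIdeal R • ⊤ : Submodule R (Fin n → R)) := by
  classical
  set Q := X ⧸ (maximalIdeal R • ⊤ : Submodule R X) with hQdef
  have htor : Module.IsTorsionBySet R Q ((maximalIdeal R : Ideal R) : Set R) := by
    intro q a
    obtain ⟨y, rfl⟩ := Submodule.Quotient.mk_surjective _ q
    rw [← Submodule.Quotient.mk_smul, Submodule.Quotient.mk_eq_zero]
    exact Submodule.smul_mem_smul a.2 Submodule.mem_top
  letI : Field (R ⧸ maximalIdeal R) := Ideal.Quotient.field _
  letI : Module (R ⧸ maximalIdeal R) Q := htor.module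
  letI : IsScalarTower R (R ⧸ maximalIdeal R) Q := htor.isScalarTower
  haveI hfinQ : Module.Finite R Q := Module.Finite.of_surjective
    (Submodule.mkQ _) (Submodule.mkQ_surjective _)
  haveI : Module.Finite (R ⧸ maximalIdeal R) Q := by
    rw [Module.finite_def]
    obtain ⟨S, hS⟩ := Module.finite_def.mp hfinQ
    refine ⟨S, ?_⟩
    rw [eq_top_iff]
    intro y _
    exact Submodule.span_le_restrictScalars R (R ⧸ maximalIdeal R) (S : Set Q)
      (hS ▸ Submodule.mem_top)
  set n := Module.finrank (R ⧸ maximalIdeal R) Q with hn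
  let bas : Module.Basis (Fin n) (R ⧸ maximalIdeal R) Q := Module.finBasis _ _
  have hmk : ∀ (r : R) (q : Q), r • q = (Ideal.Quotient.mk (maximalIdeal R) r) • q :=
    fun r q => (Module.IsTorsionBySet.mk_smul htor r q).symm
  have hx : ∀ i, ∃ v : X, Submodule.Quotient.mk v = bas i :=
    fun i => Submodule.Quotient.mk_surjective _ (bas i)
  choose x hxs using hx
  let φ : (Fin n → R) →ₗ[R] X :=
    { toFun := fun r => ∑ i, r i • x i
      map_add' := by
        intro r s
        simp [add_smul, Finset.sum_add_distrib]
      map_smul' := by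
        intro c r
        simp [Finset.smul_sum, mul_smul] }
  have hmkφ : ∀ r : Fin n → R, (Submodule.Quotient.mk (φ r) : Q)
      = ∑ i, (Ideal.Quotient.mk (maximalIdeal R) (r i)) • bas i := by
    intro r
    have h1 : (Submodule.Quotient.mk (φ r) : Q)
        = Submodule.mkQ (maximalIdeal R • ⊤ : Submodule R X) (∑ i, r i • x i) := rfl
    rw [h1, map_sum]
    refine Finset.sum_congr rfl fun i _ => ?_
    rw [map_smul]
    show r i • (Submodule.Quotient.mk (x i) : Q) = _
    rw [hxs i, hmk]
  refine ⟨n, φ, ?_, ?_⟩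
  · intro y
    have hspan : Submodule.span R (Set.range x) = ⊤ := by
      rw [← IsLocalRing.map_mkQ_eq_top (N := Submodule.span R (Set.range x)),
        Submodule.map_span]
      rw [eq_top_iff]
      intro q _
      obtain ⟨c, rfl⟩ : ∃ c : Fin n → (R ⧸ maximalIdeal R), ∑ i, c i • bas i = q :=
        ⟨bas.repr q, bas.sum_repr q⟩
      refine Submodule.sum_mem _ fun i _ => ?_
      obtain ⟨r, hr⟩ := Ideal.Quotient.mk_surjective (c i)
      rw [← hr, ← hmk]
      refine Submodule.smul_mem _ _ (Submodule.subset_span ?_)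
      exact ⟨x i, Set.mem_range_self i, hxs i⟩
    have hy : y ∈ Submodule.span R (Set.range x) := hspan ▸ Submodule.mem_top
    obtain ⟨c, hc⟩ := Submodule.mem_span_range_iff_exists_fun R |>.mp hy
    exact ⟨c, hc⟩
  · intro r hr
    rw [LinearMap.mem_ker] at hr
    have h0 : ∑ i, (Ideal.Quotient.mk (maximalIdeal R) (r i)) • bas i = 0 := by
      rw [← hmkφ, hr]
      rfl
    have h2 := Fintype.linearIndependent_iff.mp bas.linearIndependent
      (fun j => Ideal.Quotient.mk (maximalIdeal R) (r j)) h0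
    refine pi_mem_smul_top _ r fun i => ?_
    exact Ideal.Quotient.eq_zero_iff_mem.mp (h2 i)


theorem smul_ker_zero {F : Type u} [AddCommGroup F] [Module R F] {x : R}
    (hxm : ∀ a ∈ maximalIdeal R, a * x = 0) {p : Submodule R F}
    (hp : p ≤ (maximalIdeal R • ⊤ : Submodule R F)) : ∀ y : ↥p, x • y = 0 := by
  intro y
  apply Subtype.ext
  show x • (y : F) = (0 : F)
  have hy : (y : F) ∈ (maximalIdeal R • ⊤ : Submodule R F) := hp y.2
  refine Submodule.smul_induction_on hy ?_ ?_
  · intro a ha v _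
    rw [smul_smul, mul_comm, hxm a ha, zero_smul]
  · intro v w hv hw
    rw [smul_add, hv, hw, add_zero]

end SyzygyAux

open SyzygyAux in
theorem stmt1 (R : Type u) [CommRing R] [IsNoetherianRing R] [IsLocalRing R]
    (hR : ¬ IsField R) :
    List.TFAE
      [∀ M : ModuleCat.{u} R, Module.Finite R M → ¬ Module.Free R M →
          ∀ N : ModuleCat.{u} R, IsSyzygy R 2 M N → ResidueFieldIsSummand R N,
        ∀ M : ModuleCat.{u} R, Module.Finite R M → ¬ Module.Free R M →
          ∀ N : ModuleCat.{u} R, IsSyzygy R 3 M N → ResidueFieldIsSummand R N,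
        ResidueFieldIsSummand R (maximalIdeal R),
        ¬ Submodule.torsionBySet R R (maximalIdeal R : Set R) ≤ (maximalIdeal R) ^ 2] := by
  classical
  have hm_ne : maximalIdeal R ≠ ⊥ := fun h => hR (IsLocalRing.isField_iff_maximalIdeal_eq.mpr h)
  have hSocle : Submodule.torsionBySet R R (maximalIdeal R : Set R) ≤ maximalIdeal R :=
    socle_le_maximalIdeal hR
  have freeR : Module.Free R R := inferInstance
  have finR : Module.Finite R R := inferInstance
  have freeP : ∀ k : ℕ, Module.Free R (Fin k → R) := fun _ => inferInstance
  have finP : ∀ k : ℕ, Module.Finite R (Fin k → R) := fun _ => inferInstance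
  tfae_have 4 → 1 := by
    intro h4 M hMfin hMfree N hN
    obtain ⟨x, hxsoc', hx2⟩ := SetLike.not_le_iff_exists.mp h4
    have hxsoc : ∀ a ∈ maximalIdeal R, a * x = 0 := mem_socle_iff.mp hxsoc'
    obtain ⟨F, π, ⟨hfree, hfin, hsurj, hker⟩, hN1⟩ := hN
    haveI := hfree
    haveI := hfin
    have hkerne : LinearMap.ker π ≠ ⊥ := by
      intro hbot
      exact hMfree (Module.Free.of_equiv (LinearEquiv.ofBijective π
        ⟨LinearMap.ker_eq_bot.mp hbot, hsurj⟩))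
    haveI hnt : Nontrivial ↥(LinearMap.ker π) := Submodule.nontrivial_iff_ne_bot.mpr hkerne
    exact summand_of_syzygyOne hx2 hxsoc (ModuleCat.of R ↥(LinearMap.ker π)) hnt
      (smul_ker_zero hxsoc hker) N hN1
  tfae_have 4 → 2 := by
    intro h4 M hMfin hMfree N hN
    obtain ⟨x, hxsoc', hx2⟩ := SetLike.not_le_iff_exists.mp h4
    have hxsoc : ∀ a ∈ maximalIdeal R, a * x = 0 := mem_socle_iff.mp hxsoc'
    have hx0 : x ≠ 0 := by rintro rfl; exact hx2 (Submodule.zero_mem _)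
    obtain ⟨F0, π, ⟨hfree0, hfin0, hsurj0, hker0⟩, F1, ρ,
      ⟨hfree1, hfin1, hsurj1, hker1⟩, hN1⟩ := hN
    haveI := hfree0
    haveI := hfin0
    haveI := hfree1
    haveI := hfin1
    have hkerne : LinearMap.ker π ≠ ⊥ := by
      intro hbot
      exact hMfree (Module.Free.of_equiv (LinearEquiv.ofBijective π
        ⟨LinearMap.ker_eq_bot.mp hbot, hsurj0⟩))
    haveI hnt : Nontrivial ↥(LinearMap.ker π) := Submodule.nontrivial_iff_ne_bot.mpr hkerne
    have hkerρne : LinearMap.ker ρ ≠ ⊥ := by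
      intro hbot
      haveI : Module.Free R ↥(LinearMap.ker π) := Module.Free.of_equiv
        (LinearEquiv.ofBijective ρ ⟨LinearMap.ker_eq_bot.mp hbot, hsurj1⟩)
      have hss := subsingleton_of_free_of_smul_zero (R := R) (X := ↥(LinearMap.ker π)) hx0
        (smul_ker_zero hxsoc hker0)
      exact (not_subsingleton_iff_nontrivial.mpr hnt) hss
    haveI hntρ : Nontrivial ↥(LinearMap.ker ρ) := Submodule.nontrivial_iff_ne_bot.mpr hkerρne
    exact summand_of_syzygyOne hx2 hxsoc (ModuleCat.of R ↥(LinearMap.ker ρ)) hntρ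
      (smul_ker_zero hxsoc hker1) N hN1
  tfae_have 4 → 3 := by
    intro h4
    obtain ⟨x, hxsoc', hx2⟩ := SetLike.not_le_iff_exists.mp h4
    have hxsoc : ∀ a ∈ maximalIdeal R, a * x = 0 := mem_socle_iff.mp hxsoc'
    have hxm : x ∈ maximalIdeal R := hSocle hxsoc'
    refine summand_of_socle_elt (⟨x, hxm⟩ : ↥(maximalIdeal R)) ?_ ?_
    · intro a ha
      apply Subtype.ext
      show a • x = (0 : R)
      rw [smul_eq_mul, hxsoc a ha]
    · intro hmem
      have h2 := coe_mem_smul_of_mem_smul_top hmem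
      rw [Ideal.smul_eq_mul, ← pow_two] at h2
      exact hx2 h2
  tfae_have 3 → 4 := by
    intro h3 hle
    obtain ⟨w, hw1, hw2⟩ := exists_socle_elt h3
    apply hw2
    apply mem_smul_top_of_coe_mem_smul
    have hsocw : (w : R) ∈ Submodule.torsionBySet R R (maximalIdeal R : Set R) := by
      rw [mem_socle_iff]
      intro a ha
      have h2 := congrArg (Subtype.val) (hw1 a ha)
      simpa [smul_eq_mul] using h2
    have h3' := hle hsocw
    rw [pow_two, ← Ideal.smul_eq_mul] at h3'
    exact h3'
  tfae_have 1 → 4 := by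
    intro h1 hP
    by_cases hsoc : Submodule.torsionBySet R R (maximalIdeal R : Set R) = ⊥
    · haveI : Module.Finite R (R ⧸ (maximalIdeal R : Submodule R R)) :=
        Module.Finite.of_surjective (Submodule.mkQ _) (Submodule.mkQ_surjective _)
      haveI : Module.Finite R
          ↥(LinearMap.ker (Submodule.mkQ (maximalIdeal R : Submodule R R))) :=
        (Module.Finite.iff_fg
          (N := LinearMap.ker (Submodule.mkQ (maximalIdeal R : Submodule R R)))).mpr
          (IsNoetherian.noetherian _)
      obtain ⟨n1, φ1, hsurj1, hker1⟩ := exists_minimal_cover (R := R)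
        (↥(LinearMap.ker (Submodule.mkQ (maximalIdeal R : Submodule R R))))
      have hnonfree : ¬ Module.Free R
          (ModuleCat.of R (R ⧸ (maximalIdeal R : Submodule R R))) :=
        not_free_of_cover (Submodule.mkQ _) (Submodule.mkQ_surjective _)
          (by rw [Submodule.ker_mkQ, ideal_smul_top])
          (by rw [Submodule.ker_mkQ]; exact hm_ne)
      have hsyz : IsSyzygy R 2 (ModuleCat.of R (R ⧸ (maximalIdeal R : Submodule R R)))
          (ModuleCat.of R ↥(LinearMap.ker φ1)) :=
        ⟨ModuleCat.of R R, Submodule.mkQ _,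
          ⟨freeR, finR, Submodule.mkQ_surjective _,
            by rw [Submodule.ker_mkQ, ideal_smul_top]⟩,
          ModuleCat.of R (Fin n1 → R), φ1,
          ⟨freeP n1, finP n1, hsurj1, hker1⟩,
          ⟨LinearEquiv.refl R _⟩⟩
      exact no_summand_of_socle_bot hsoc (h1 _ ‹Module.Finite R (R ⧸ (maximalIdeal R : Submodule R R))› hnonfree _ hsyz)
    · obtain ⟨d, ρ2, hsurj2, hker2⟩ := exists_socle_cover (R := R)
      haveI : Module.Finite R
          (R ⧸ (Submodule.torsionBySet R R (maximalIdeal R : Set R))) :=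
        Module.Finite.of_surjective (Submodule.mkQ _) (Submodule.mkQ_surjective _)
      have hkerEq : LinearMap.ker
            (Submodule.mkQ (Submodule.torsionBySet R R (maximalIdeal R : Set R)))
          = Submodule.torsionBySet R R (maximalIdeal R : Set R) := Submodule.ker_mkQ _
      have hnonfree : ¬ Module.Free R (ModuleCat.of R
          (R ⧸ (Submodule.torsionBySet R R (maximalIdeal R : Set R)))) :=
        not_free_of_cover (Submodule.mkQ _) (Submodule.mkQ_surjective _)
          (by rw [hkerEq, ideal_smul_top]; exact hSocle)
          (by rw [hkerEq]; exact hsoc)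
      let e1 := LinearEquiv.ofEq _ _ hkerEq.symm
      let ρ' := e1.toLinearMap ∘ₗ ρ2
      have hsurj' : Function.Surjective ρ' := e1.surjective.comp hsurj2
      have hker' : LinearMap.ker ρ'
          = Submodule.pi Set.univ (fun _ : Fin d => (maximalIdeal R : Submodule R R)) := by
        rw [← hker2]
        ext r
        simp [ρ', LinearMap.mem_ker, LinearEquiv.map_eq_zero_iff]
      have hsyz : IsSyzygy R 2
          (ModuleCat.of R (R ⧸ (Submodule.torsionBySet R R (maximalIdeal R : Set R))))
          (ModuleCat.of R ↥(LinearMap.ker ρ')) :=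
        ⟨ModuleCat.of R R, Submodule.mkQ _,
          ⟨freeR, finR, Submodule.mkQ_surjective _,
            by rw [hkerEq, ideal_smul_top]; exact hSocle⟩,
          ModuleCat.of R (Fin d → R), ρ',
          ⟨freeP d, finP d, hsurj', by rw [hker']; exact pi_le_smul_top d⟩,
          ⟨LinearEquiv.refl R _⟩⟩
      have hres := h1 _ ‹Module.Finite R (R ⧸ (Submodule.torsionBySet R R (maximalIdeal R : Set R)))› hnonfree _ hsyz
      exact not_summand_pi hP d (summand_congr (LinearEquiv.ofEq _ _ hker') hres)
  tfae_have 2 → 4 := by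
    intro h2 hP
    by_cases hsoc : Submodule.torsionBySet R R (maximalIdeal R : Set R) = ⊥
    · haveI : Module.Finite R (R ⧸ (maximalIdeal R : Submodule R R)) :=
        Module.Finite.of_surjective (Submodule.mkQ _) (Submodule.mkQ_surjective _)
      haveI : Module.Finite R
          ↥(LinearMap.ker (Submodule.mkQ (maximalIdeal R : Submodule R R))) :=
        (Module.Finite.iff_fg
          (N := LinearMap.ker (Submodule.mkQ (maximalIdeal R : Submodule R R)))).mpr
          (IsNoetherian.noetherian _)
      obtain ⟨n1, φ1, hsurj1, hker1⟩ := exists_minimal_cover (R := R)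
        (↥(LinearMap.ker (Submodule.mkQ (maximalIdeal R : Submodule R R))))
      haveI : Module.Finite R ↥(LinearMap.ker φ1) :=
        (Module.Finite.iff_fg (N := LinearMap.ker φ1)).mpr (IsNoetherian.noetherian _)
      obtain ⟨n2, φ2, hsurj2', hker2'⟩ := exists_minimal_cover (R := R) (↥(LinearMap.ker φ1))
      have hnonfree : ¬ Module.Free R
          (ModuleCat.of R (R ⧸ (maximalIdeal R : Submodule R R))) :=
        not_free_of_cover (Submodule.mkQ _) (Submodule.mkQ_surjective _)
          (by rw [Submodule.ker_mkQ, ideal_smul_top])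
          (by rw [Submodule.ker_mkQ]; exact hm_ne)
      have hsyz : IsSyzygy R 3 (ModuleCat.of R (R ⧸ (maximalIdeal R : Submodule R R)))
          (ModuleCat.of R ↥(LinearMap.ker φ2)) :=
        ⟨ModuleCat.of R R, Submodule.mkQ _,
          ⟨freeR, finR, Submodule.mkQ_surjective _,
            by rw [Submodule.ker_mkQ, ideal_smul_top]⟩,
          ModuleCat.of R (Fin n1 → R), φ1,
          ⟨freeP n1, finP n1, hsurj1, hker1⟩,
          ModuleCat.of R (Fin n2 → R), φ2,
          ⟨freeP n2, finP n2, hsurj2', hker2'⟩,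
          ⟨LinearEquiv.refl R _⟩⟩
      exact no_summand_of_socle_bot hsoc (h2 _ ‹Module.Finite R (R ⧸ (maximalIdeal R : Submodule R R))› hnonfree _ hsyz)
    · obtain ⟨d, ρ2, hsurj2, hker2⟩ := exists_socle_cover (R := R)
      obtain ⟨n, a, hspan⟩ := Submodule.fg_iff_exists_fin_generating_family.mp
        (IsNoetherian.noetherian (maximalIdeal R : Submodule R R))
      let A : R →ₗ[R] (Fin n → R) :=
        { toFun := fun r i => r * a i
          map_add' := by intro r s; funext i; simp [add_mul]
          map_smul' := by intro c r; funext i; simp [mul_assoc] }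
      have hkerA : LinearMap.ker A = Submodule.torsionBySet R R (maximalIdeal R : Set R) := by
        ext r
        rw [LinearMap.mem_ker, mem_socle_iff]
        constructor
        · intro h0 b hb
          have hb' : b ∈ Submodule.span R (Set.range a) := by rw [hspan]; exact hb
          clear hb
          induction hb' using Submodule.span_induction with
          | mem v hv =>
            obtain ⟨i, rfl⟩ := hv
            have := congrFun h0 i
            simpa [A, mul_comm] using this
          | zero => simp
          | add u v _ _ hu hv => rw [add_mul, hu, hv, add_zero]
          | smul c u _ hu => rw [smul_eq_mul, mul_assoc, hu, mul_zero]
        · intro h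
          funext i
          have hai : a i ∈ maximalIdeal R := by
            rw [← hspan]
            exact Submodule.subset_span (Set.mem_range_self i)
          show r * a i = 0
          rw [mul_comm]
          exact h (a i) hai
      have hex : ∃ i, a i ≠ 0 := by
        by_contra hall
        push_neg at hall
        exact hm_ne (by
          rw [← hspan, Submodule.span_eq_bot]
          rintro _ ⟨i, rfl⟩
          exact hall i)
      have hrangeA_ne : LinearMap.range A ≠ ⊥ := by
        obtain ⟨i, hai⟩ := hex
        intro hbot
        have h1 : A 1 = 0 := by
          have : A 1 ∈ (⊥ : Submodule R (Fin n → R)) := hbot ▸ LinearMap.mem_range_self A 1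
          simpa using this
        exact hai (by simpa [A] using congrFun h1 i)
      have hrangeA_le : LinearMap.range A ≤ (maximalIdeal R • ⊤ : Submodule R (Fin n → R)) := by
        rintro _ ⟨r, rfl⟩
        refine pi_mem_smul_top _ _ fun i => ?_
        have hai : a i ∈ maximalIdeal R := by
          rw [← hspan]
          exact Submodule.subset_span (Set.mem_range_self i)
        exact (maximalIdeal R).mul_mem_left r hai
      haveI : Module.Finite R ((Fin n → R) ⧸ LinearMap.range A) :=
        Module.Finite.of_surjective (Submodule.mkQ _) (Submodule.mkQ_surjective _)
      have hnonfree : ¬ Module.Free R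
          (ModuleCat.of R ((Fin n → R) ⧸ LinearMap.range A)) :=
        not_free_of_cover (Submodule.mkQ _) (Submodule.mkQ_surjective _)
          (by rw [Submodule.ker_mkQ]; exact hrangeA_le)
          (by rw [Submodule.ker_mkQ]; exact hrangeA_ne)
      let ρ1 : R →ₗ[R] ↥(LinearMap.ker (Submodule.mkQ (LinearMap.range A))) :=
        LinearMap.codRestrict _ A (fun r => by
          rw [Submodule.ker_mkQ]
          exact LinearMap.mem_range_self A r)
      have hsurjρ1 : Function.Surjective ρ1 := by
        rintro ⟨v, hv⟩
        have hv' : v ∈ LinearMap.range A := by rwa [Submodule.ker_mkQ] at hv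
        obtain ⟨r, hr⟩ := hv'
        exact ⟨r, Subtype.ext hr⟩
      have hkerρ1 : LinearMap.ker ρ1 = Submodule.torsionBySet R R (maximalIdeal R : Set R) := by
        rw [LinearMap.ker_codRestrict, hkerA]
      let e1 := LinearEquiv.ofEq _ _ hkerρ1.symm
      let ρ2' := e1.toLinearMap ∘ₗ ρ2
      have hsurj2'' : Function.Surjective ρ2' := e1.surjective.comp hsurj2
      have hker2'' : LinearMap.ker ρ2'
          = Submodule.pi Set.univ (fun _ : Fin d => (maximalIdeal R : Submodule R R)) := by
        rw [← hker2]
        ext r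
        simp [ρ2', LinearMap.mem_ker, LinearEquiv.map_eq_zero_iff]
      have hsyz : IsSyzygy R 3 (ModuleCat.of R ((Fin n → R) ⧸ LinearMap.range A))
          (ModuleCat.of R ↥(LinearMap.ker ρ2')) :=
        ⟨ModuleCat.of R (Fin n → R), Submodule.mkQ _,
          ⟨freeP n, finP n, Submodule.mkQ_surjective _,
            by rw [Submodule.ker_mkQ]; exact hrangeA_le⟩,
          ModuleCat.of R R, ρ1,
          ⟨freeR, finR, hsurjρ1,
            by rw [hkerρ1, ideal_smul_top]; exact hSocle⟩,
          ModuleCat.of R (Fin d → R), ρ2',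
          ⟨freeP d, finP d, hsurj2'', by rw [hker2'']; exact pi_le_smul_top d⟩,
          ⟨LinearEquiv.refl R _⟩⟩
      have hres := h2 _ ‹Module.Finite R ((Fin n → R) ⧸ LinearMap.range A)› hnonfree _ hsyz
      exact not_summand_pi hP d (summand_congr (LinearEquiv.ofEq _ _ hker2'') hres)
  tfae_finish
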